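/- Let A be a (possibly noncommutative) ring with 1, r ≥ 0, and y_1, …, y_{2r+1} ∈ A. In the formal power series ring A[[t]], define G_{2r+2} = 1 and, for s = 2r+1 down to 1, G_s = (1 − t·G_{s+1}·y_s)⁻¹, where the inverse is the (two-sided) power series inverse, which exists since each series 1 − t·G_{s+1}·y_s has constant term 1. Set F = G_1 (the canonical form of the finite noncommutative Stieltjes continued fraction) and write F = Σ_{n≥0} F_n·t^n with F_n ∈ A. Define polynomials p_s, q_s ∈ A[t] by p_0 = 1, p_1 = 1 − t·y_1, p_{s+1} = p_s − t·y_{s+1}·p_{s−1}, and q_0 = 1, q_1 = 1, q_{s+1} = q_s − t·y_{s+1}·q_{s−1}, and set P = p_{2r+1}, Q = q_{2r+1}. Then P·F = Q in A[[t]]; consequently, writing P = Σ_{i=0}^{r+1} (−1)^i·P_i·t^i with P_i ∈ A (so P_0 = 1), the coefficients of F satisfy the linear recursion Σ_{i=0}^{r+1} (−1)^i·P_i·F_{n+r+1−i} = 0 for all n ≥ 0. -/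

import Mathlib

namespace Stmt9

open PowerSeries

/-- The canonical-form noncommutative Stieltjes continued fraction, built from the top:
`Gaux y N j` is `G_{N-j}`, where `G_N = 1` and `G_s = (1 - t·G_{s+1}·y_s)⁻¹`
(two-sided power series inverse, which exists as the series has constant term `1`). -/
noncomputable def Gaux (A : Type*) [Ring A] (y : ℕ → A) (N : ℕ) : ℕ → PowerSeries A
  | 0 => 1
  | (j+1) => PowerSeries.invOfUnit
      (1 - PowerSeries.X * Gaux A y N j * PowerSeries.C (y (N - (j + 1)))) 1

/-- `p_0 = 1`, `p_1 = 1 - t·y_1`, `p_{s+1} = p_s - t·y_{s+1}·p_{s-1}`. -/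
noncomputable def pPoly (A : Type*) [Ring A] (y : ℕ → A) : ℕ → PowerSeries A
  | 0 => 1
  | 1 => 1 - PowerSeries.X * PowerSeries.C (y 1)
  | (s+2) => pPoly A y (s + 1) - PowerSeries.X * PowerSeries.C (y (s + 2)) * pPoly A y s

/-- `q_0 = 1`, `q_1 = 1`, `q_{s+1} = q_s - t·y_{s+1}·q_{s-1}`. -/
noncomputable def qPoly (A : Type*) [Ring A] (y : ℕ → A) : ℕ → PowerSeries A
  | 0 => 1
  | 1 => 1
  | (s+2) => qPoly A y (s + 1) - PowerSeries.X * PowerSeries.C (y (s + 2)) * qPoly A y s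

lemma hgaux (A : Type*) [Ring A] (y : ℕ → A) (N j : ℕ) :
    Gaux A y N (j+1) - 1 =
    PowerSeries.X * Gaux A y N j * PowerSeries.C (y (N - (j+1))) * Gaux A y N (j+1) := by
  have h0 : constantCoeff
      (1 - PowerSeries.X * Gaux A y N j * PowerSeries.C (y (N-(j+1)))) = ((1:Aˣ):A) := by
    simp [mul_assoc]
  have h := mul_invOfUnit _ _ h0
  have hG : Gaux A y N (j+1) =
      invOfUnit (1 - PowerSeries.X * Gaux A y N j * PowerSeries.C (y (N-(j+1)))) 1 := rfl
  rw [sub_mul, one_mul] at h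
  rw [hG]
  exact sub_eq_of_eq_add' (sub_eq_iff_eq_add.mp h)

/-- `W r k = y_k G_k y_{k-1} G_{k-1} ⋯ y_1 G_1` where `G_s = Gaux (2r+2) (2r+2-s)`. -/
noncomputable def W (A : Type*) [Ring A] (y : ℕ → A) (r : ℕ) : ℕ → PowerSeries A
  | 0 => 1
  | (k+1) => PowerSeries.C (y (k+1)) * Gaux A y (2*r+2) (2*r+2 - (k+1)) * W A y r k

lemma W_succ (A : Type*) [Ring A] (y : ℕ → A) (r k : ℕ) :
    W A y r (k+1) =
    PowerSeries.C (y (k+1)) * Gaux A y (2*r+2) (2*r+2 - (k+1)) * W A y r k := rfl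

lemma Xshift {A : Type*} [Ring A] (a b : PowerSeries A) (k : ℕ) :
    PowerSeries.X * a * (PowerSeries.X^k * b) = PowerSeries.X^(k+1) * (a * b) := by
  have h : a * PowerSeries.X^k = PowerSeries.X^k * a := (commute_X a).pow_right k
  calc PowerSeries.X * a * (PowerSeries.X^k * b)
      = PowerSeries.X * (a * PowerSeries.X^k) * b := by noncomm_ring
    _ = PowerSeries.X * (PowerSeries.X^k * a) * b := by rw [h]
    _ = PowerSeries.X^(k+1) * (a * b) := by rw [pow_succ']; noncomm_ring

lemma main (A : Type*) [Ring A] (y : ℕ → A) (r : ℕ) :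
    ∀ s m, s + m = 2*r →
      pPoly A y s * Gaux A y (2*r+2) (2*r+1) - qPoly A y s
        = PowerSeries.X^(s+1) * Gaux A y (2*r+2) m * W A y r (s+1)
  | 0, m, h => by
    obtain rfl : m = 2*r := by omega
    have d1 := hgaux A y (2*r+2) (2*r)
    rw [show 2*r+2 - (2*r+1) = 1 by omega] at d1
    simp only [pPoly, qPoly, one_mul, pow_one]
    rw [W_succ, show 2*r+2 - (0+1) = 2*r+1 by omega]
    calc Gaux A y (2*r+2) (2*r+1) - 1
        = PowerSeries.X * Gaux A y (2*r+2) (2*r) * PowerSeries.C (y 1)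
            * Gaux A y (2*r+2) (2*r+1) := d1
      _ = PowerSeries.X ^ (0+1) * Gaux A y (2*r+2) (2*r)
            * (PowerSeries.C (y (0+1)) * Gaux A y (2*r+2) (2*r+1) * W A y r 0) := by
          simp only [W, pow_one]; noncomm_ring
  | 1, m, h => by
    have d1 := hgaux A y (2*r+2) (2*r)
    rw [show 2*r+2 - (2*r+1) = 1 by omega] at d1
    have d2 := hgaux A y (2*r+2) m
    rw [show 2*r+2 - (m+1) = 2 by omega, show m + 1 = 2*r by omega] at d2
    simp only [pPoly, qPoly]
    rw [W_succ, W_succ, show 2*r+2 - (1+1) = 2*r by omega,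
      show 2*r+2 - (0+1) = 2*r+1 by omega]
    calc (1 - PowerSeries.X * PowerSeries.C (y 1)) * Gaux A y (2*r+2) (2*r+1) - 1
        = (Gaux A y (2*r+2) (2*r+1) - 1)
            - PowerSeries.X * PowerSeries.C (y 1) * Gaux A y (2*r+2) (2*r+1) := by
          noncomm_ring
      _ = PowerSeries.X * Gaux A y (2*r+2) (2*r) * PowerSeries.C (y 1)
            * Gaux A y (2*r+2) (2*r+1)
            - PowerSeries.X * PowerSeries.C (y 1) * Gaux A y (2*r+2) (2*r+1) := by rw [d1]
      _ = PowerSeries.X * ((Gaux A y (2*r+2) (2*r) - 1)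
            * (PowerSeries.C (y 1) * Gaux A y (2*r+2) (2*r+1))) := by noncomm_ring
      _ = PowerSeries.X * ((PowerSeries.X * Gaux A y (2*r+2) m * PowerSeries.C (y 2)
            * Gaux A y (2*r+2) (2*r))
            * (PowerSeries.C (y 1) * Gaux A y (2*r+2) (2*r+1))) := by
          rw [d2]
      _ = PowerSeries.X ^ (1+1) * Gaux A y (2*r+2) m
            * (PowerSeries.C (y (1+1)) * Gaux A y (2*r+2) (2*r)
              * (PowerSeries.C (y (0+1)) * Gaux A y (2*r+2) (2*r+1) * W A y r 0)) := by
          simp only [W, pow_two]; noncomm_ring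
  | (s+2), m, h => by
    have IH1 := main A y r (s+1) (m+1) (by omega)
    have IH0 := main A y r s (m+2) (by omega)
    have d := hgaux A y (2*r+2) m
    rw [show 2*r+2 - (m+1) = s+3 by omega] at d
    have hW2 : W A y r (s+1+1)
        = PowerSeries.C (y (s+2)) * Gaux A y (2*r+2) (m+2) * W A y r (s+1) := by
      rw [W_succ, show 2*r+2 - (s+1+1) = m+2 by omega, show s+1+1 = s+2 from rfl]
    have hW3 : W A y r (s+2+1)
        = PowerSeries.C (y (s+3)) * Gaux A y (2*r+2) (m+1) * W A y r (s+1+1) := by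
      rw [W_succ, show 2*r+2 - (s+2+1) = m+1 by omega, show s+2+1 = s+3 from rfl,
        show s+2 = s+1+1 from rfl]
    simp only [pPoly, qPoly]
    calc (pPoly A y (s+1) - PowerSeries.X * PowerSeries.C (y (s+2)) * pPoly A y s)
          * Gaux A y (2*r+2) (2*r+1)
          - (qPoly A y (s+1) - PowerSeries.X * PowerSeries.C (y (s+2)) * qPoly A y s)
        = (pPoly A y (s+1) * Gaux A y (2*r+2) (2*r+1) - qPoly A y (s+1))
          - PowerSeries.X * PowerSeries.C (y (s+2))
            * (pPoly A y s * Gaux A y (2*r+2) (2*r+1) - qPoly A y s) := by noncomm_ring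
      _ = PowerSeries.X^(s+1+1) * Gaux A y (2*r+2) (m+1) * W A y r (s+1+1)
          - PowerSeries.X * PowerSeries.C (y (s+2))
            * (PowerSeries.X^(s+1) * (Gaux A y (2*r+2) (m+2) * W A y r (s+1))) := by
          rw [IH1, IH0, mul_assoc (PowerSeries.X^(s+1))]
      _ = PowerSeries.X^(s+1+1) * Gaux A y (2*r+2) (m+1) * W A y r (s+1+1)
          - PowerSeries.X^(s+1+1)
            * (PowerSeries.C (y (s+2)) * (Gaux A y (2*r+2) (m+2) * W A y r (s+1))) := by
          rw [Xshift]
      _ = PowerSeries.X^(s+1+1) * ((Gaux A y (2*r+2) (m+1) - 1)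
            * (PowerSeries.C (y (s+2)) * Gaux A y (2*r+2) (m+2) * W A y r (s+1))) := by
          rw [hW2]; noncomm_ring
      _ = PowerSeries.X^(s+1+1)
            * ((PowerSeries.X * Gaux A y (2*r+2) m * PowerSeries.C (y (s+3))
              * Gaux A y (2*r+2) (m+1))
            * (PowerSeries.C (y (s+2)) * Gaux A y (2*r+2) (m+2) * W A y r (s+1))) := by
          rw [d]
      _ = PowerSeries.X^(s+1+1) * (PowerSeries.X * (Gaux A y (2*r+2) m
            * (PowerSeries.C (y (s+3)) * Gaux A y (2*r+2) (m+1) * W A y r (s+1+1)))) := by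
          rw [hW2]; noncomm_ring
      _ = PowerSeries.X^(s+2+1) * Gaux A y (2*r+2) m * W A y r (s+2+1) := by
          rw [hW3, ← mul_assoc, ← pow_succ, show s+1+1+1 = s+2+1 from rfl]; simp only [mul_assoc]

lemma part1 (A : Type*) [Ring A] (y : ℕ → A) (r : ℕ) :
    pPoly A y (2*r+1) * Gaux A y (2*r+2) (2*r+1) = qPoly A y (2*r+1) := by
  match r with
  | 0 =>
    have d := hgaux A y (2*0+2) (2*0)
    rw [show 2*0+2 - (2*0+1) = 1 by omega] at d
    have g0 : Gaux A y (2*0+2) (2*0) = 1 := rfl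
    rw [g0, mul_one] at d
    rw [show (2*0+1 : ℕ) = 1 from rfl] at d ⊢
    rw [show (2*0+2 : ℕ) = 2 from rfl] at d ⊢
    simp only [pPoly, qPoly]
    rw [sub_mul, one_mul, sub_eq_iff_eq_add]
    rw [sub_eq_iff_eq_add] at d
    conv_lhs => rw [d]
    exact add_comm _ _
  | (r'+1) =>
    have IH1 := main A y (r'+1) (2*r'+2) 0 (by omega)
    have IH0 := main A y (r'+1) (2*r'+1) 1 (by omega)
    have g0 : Gaux A y (2*(r'+1)+2) 0 = 1 := rfl
    have hW := W_succ A y (r'+1) (2*r'+2)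
    rw [show 2*(r'+1)+2 - (2*r'+2+1) = 1 by omega] at hW
    rw [show 2*(r'+1)+1 = 2*r'+1+2 by omega] at IH1 IH0 ⊢
    rw [← sub_eq_zero]
    simp only [pPoly, qPoly]
    rw [show (2:ℕ)*r'+1+1 = 2*r'+2 by omega]
    calc (pPoly A y (2*r'+2)
            - PowerSeries.X * PowerSeries.C (y (2*r'+1+2)) * pPoly A y (2*r'+1))
          * Gaux A y (2*(r'+1)+2) (2*r'+1+2)
          - (qPoly A y (2*r'+2)
            - PowerSeries.X * PowerSeries.C (y (2*r'+1+2)) * qPoly A y (2*r'+1))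
        = (pPoly A y (2*r'+2) * Gaux A y (2*(r'+1)+2) (2*r'+1+2) - qPoly A y (2*r'+2))
          - PowerSeries.X * PowerSeries.C (y (2*r'+1+2))
            * (pPoly A y (2*r'+1) * Gaux A y (2*(r'+1)+2) (2*r'+1+2) - qPoly A y (2*r'+1)) := by
          noncomm_ring
      _ = PowerSeries.X^(2*r'+2+1) * Gaux A y (2*(r'+1)+2) 0 * W A y (r'+1) (2*r'+2+1)
          - PowerSeries.X * PowerSeries.C (y (2*r'+1+2))
            * (PowerSeries.X^(2*r'+1+1)
              * (Gaux A y (2*(r'+1)+2) 1 * W A y (r'+1) (2*r'+1+1))) := by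
          rw [IH1, IH0, mul_assoc (PowerSeries.X^(2*r'+1+1))]
      _ = 0 := by
          rw [Xshift, g0, hW, show (2:ℕ)*r'+1+1+1 = 2*r'+2+1 by omega,
            show (2:ℕ)*r'+1+1 = 2*r'+2 by omega, show (2:ℕ)*r'+1+2 = 2*r'+2+1 by omega]
          noncomm_ring

lemma pdeg (A : Type*) [Ring A] (y : ℕ → A) :
    ∀ s i, s + 1 < 2*i → (PowerSeries.coeff i) (pPoly A y s) = 0
  | 0, i, h => by
    simp only [pPoly]
    rw [coeff_one, if_neg (by omega)]
  | 1, i, h => by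
    obtain ⟨i', rfl⟩ : ∃ i', i = i'+1 := ⟨i-1, by omega⟩
    simp only [pPoly, map_sub, coeff_succ_X_mul, coeff_one, coeff_C]
    rw [if_neg (by omega), if_neg (by omega), sub_zero]
  | (s+2), i, h => by
    obtain ⟨i', rfl⟩ : ∃ i', i = i'+1 := ⟨i-1, by omega⟩
    simp only [pPoly, map_sub, mul_assoc, coeff_succ_X_mul, coeff_C_mul]
    rw [pdeg A y (s+1) (i'+1) (by omega), pdeg A y s i' (by omega)]
    simp

lemma qdeg (A : Type*) [Ring A] (y : ℕ → A) :
    ∀ s i, s < 2*i → (PowerSeries.coeff i) (qPoly A y s) = 0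
  | 0, i, h => by
    simp only [qPoly]
    rw [coeff_one, if_neg (by omega)]
  | 1, i, h => by
    simp only [qPoly]
    rw [coeff_one, if_neg (by omega)]
  | (s+2), i, h => by
    obtain ⟨i', rfl⟩ : ∃ i', i = i'+1 := ⟨i-1, by omega⟩
    simp only [qPoly, map_sub, mul_assoc, coeff_succ_X_mul, coeff_C_mul]
    rw [qdeg A y (s+1) (i'+1) (by omega), qdeg A y s i' (by omega)]
    simp


/-- Theorem 3.13 of Di Francesco–Kedem: with `F = G_1` the canonical form of the finite
noncommutative Stieltjes continued fraction with weights `y_1, …, y_{2r+1}`, and `P = p_{2r+1}`,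
`Q = q_{2r+1}`, one has `P·F = Q` in `A⟦t⟧`; consequently, writing
`P = Σ_{i=0}^{r+1} (-1)^i·P_i·t^i` (so `P_i = (-1)^i·coeff_i P`), the coefficients
`F_n` of `F` satisfy the linear recursion `Σ_{i=0}^{r+1} (-1)^i·P_i·F_{n+r+1-i} = 0`
for all `n ≥ 0`. -/
theorem stmt9 (A : Type*) [Ring A] (r : ℕ) (y : ℕ → A) :
    pPoly A y (2 * r + 1) * Gaux A y (2 * r + 2) (2 * r + 1) = qPoly A y (2 * r + 1) ∧
    ∀ n : ℕ,
      ∑ i ∈ Finset.range (r + 2),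
        (-1 : A) ^ i * ((-1 : A) ^ i * PowerSeries.coeff i (pPoly A y (2 * r + 1))) *
          PowerSeries.coeff (n + r + 1 - i) (Gaux A y (2 * r + 2) (2 * r + 1)) = 0 := by
  have h1 := part1 A y r
  refine ⟨h1, fun n => ?_⟩
  have hsum : ∑ i ∈ Finset.range (r + 2),
        (-1 : A) ^ i * ((-1 : A) ^ i * PowerSeries.coeff i (pPoly A y (2 * r + 1))) *
          PowerSeries.coeff (n + r + 1 - i) (Gaux A y (2 * r + 2) (2 * r + 1))
      = ∑ i ∈ Finset.range (r + 2),
          PowerSeries.coeff i (pPoly A y (2 * r + 1)) *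
            PowerSeries.coeff (n + r + 1 - i) (Gaux A y (2 * r + 2) (2 * r + 1)) := by
    refine Finset.sum_congr rfl fun i _ => ?_
    rw [← mul_assoc (((-1 : A))^i), ← pow_add, Even.neg_one_pow ⟨i, rfl⟩, one_mul]
  rw [hsum]
  have hc : (PowerSeries.coeff (n+r+1))
        (pPoly A y (2*r+1) * Gaux A y (2*r+2) (2*r+1))
      = ∑ i ∈ Finset.range (r + 2),
          PowerSeries.coeff i (pPoly A y (2 * r + 1)) *
            PowerSeries.coeff (n + r + 1 - i) (Gaux A y (2 * r + 2) (2 * r + 1)) := by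
    rw [coeff_mul, Finset.Nat.sum_antidiagonal_eq_sum_range_succ
      (fun a b => PowerSeries.coeff a (pPoly A y (2 * r + 1)) *
        PowerSeries.coeff b (Gaux A y (2 * r + 2) (2 * r + 1)))]
    symm
    apply Finset.sum_subset
    · intro x hx
      simp only [Finset.mem_range] at *
      omega
    · intro x hx1 hx2
      simp only [Finset.mem_range] at hx1 hx2
      rw [pdeg A y (2*r+1) x (by omega), zero_mul]
  rw [← hc, h1, qdeg A y (2*r+1) (n+r+1) (by omega)]

end Stmt9
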